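/- Let 0 < ε < 1/9 and let p, q ∈ ℝ² be distinct points. Then for every point b ∈ B(p,q), one has (1 + ε/2)·‖p − q‖ + (1 + ε)·‖q − b‖ ≤ (1 + ε)·‖p − b‖. -/

import Mathlib

/-- The cone `W₁` with apex `p`, axis direction `q - p`, and aperture `√ε/2`. -/
def W1 (ε : ℝ) (p q : EuclideanSpace ℝ (Fin 2)) : Set (EuclideanSpace ℝ (Fin 2)) :=
  {x | x = p ∨ InnerProductGeometry.angle (x - p) (q - p) ≤ Real.sqrt ε / 4}

/-- The cone `W₂` with apex `q`, axis direction `q - p`, and aperture `√ε`. -/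
def W2 (ε : ℝ) (p q : EuclideanSpace ℝ (Fin 2)) : Set (EuclideanSpace ℝ (Fin 2)) :=
  {x | x = q ∨ InnerProductGeometry.angle (x - q) (q - p) ≤ Real.sqrt ε / 2}

/-- The region `B(p,q) = W₁ ∩ W₂`. -/
def Bset (ε : ℝ) (p q : EuclideanSpace ℝ (Fin 2)) : Set (EuclideanSpace ℝ (Fin 2)) :=
  W1 ε p q ∩ W2 ε p q

/-- For all `b ∈ B(p,q)`:
`(1 + ε/2)·‖p - q‖ + (1 + ε)·‖q - b‖ ≤ (1 + ε)·‖p - b‖`. -/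
theorem key_ineq_B (ε : ℝ) (hε0 : 0 < ε) (hε1 : ε < 1 / 9)
    (p q : EuclideanSpace ℝ (Fin 2)) (hpq : p ≠ q)
    (b : EuclideanSpace ℝ (Fin 2)) (hb : b ∈ Bset ε p q) :
    (1 + ε / 2) * ‖p - q‖ + (1 + ε) * ‖q - b‖ ≤ (1 + ε) * ‖p - b‖ := by
  have hd : (0:ℝ) ≤ ‖p - q‖ := norm_nonneg _
  rcases hb.2 with hbq | hang
  · subst hbq
    simp only [sub_self, norm_zero, mul_zero, add_zero]
    nlinarith
  · set d := ‖p - q‖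
    set r := ‖q - b‖
    set R := ‖p - b‖
    have hr : (0:ℝ) ≤ r := norm_nonneg _
    have hR : (0:ℝ) ≤ R := norm_nonneg _
    -- sqrt ε bound
    have hsq : Real.sqrt ε ^ 2 = ε := Real.sq_sqrt hε0.le
    have hsqle : Real.sqrt ε ≤ 1 / 3 := by
      rw [show (1:ℝ)/3 = Real.sqrt (1/9) by
        rw [show (1:ℝ)/9 = (1/3)^2 by norm_num, Real.sqrt_sq (by norm_num)]]
      exact Real.sqrt_le_sqrt hε1.le
    have hsqnn : 0 ≤ Real.sqrt ε := Real.sqrt_nonneg _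
    -- cos bound
    have hθ0 : 0 ≤ InnerProductGeometry.angle (b - q) (q - p) :=
      InnerProductGeometry.angle_nonneg _ _
    have hcos : Real.cos (Real.sqrt ε / 2) ≤
        Real.cos (InnerProductGeometry.angle (b - q) (q - p)) :=
      Real.cos_le_cos_of_nonneg_of_le_pi hθ0 (by nlinarith [Real.pi_gt_three]) hang
    have hcoslb : 1 - ε / 8 ≤ Real.cos (Real.sqrt ε / 2) := by
      have := Real.one_sub_sq_div_two_le_cos (x := Real.sqrt ε / 2)
      nlinarith
    -- inner product
    have hinner : Real.cos (InnerProductGeometry.angle (b - q) (q - p)) * (r * d) =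
        inner ℝ (b - q) (q - p) := by
      have := InnerProductGeometry.cos_angle_mul_norm_mul_norm (b - q) (q - p)
      rw [norm_sub_rev b q, norm_sub_rev q p] at this
      exact this
    have hinnlb : (1 - ε / 8) * (r * d) ≤ inner ℝ (b - q) (q - p) := by
      rw [← hinner]
      have hcos2 : 1 - ε / 8 ≤ Real.cos (InnerProductGeometry.angle (b - q) (q - p)) :=
        le_trans hcoslb hcos
      have : (0:ℝ) ≤ r * d := mul_nonneg hr hd
      nlinarith
    -- law of cosines
    have hexp : R ^ 2 = d ^ 2 + 2 * inner ℝ (p - q) (q - b) + r ^ 2 := by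
      have h1 : p - b = (p - q) + (q - b) := by abel
      have := norm_add_sq_real (p - q) (q - b)
      rw [← h1] at this
      simpa using this
    have hflip : (inner ℝ (p - q) (q - b) : ℝ) = inner ℝ (b - q) (q - p) := by
      rw [show p - q = -(q - p) by abel, show q - b = -(b - q) by abel,
        inner_neg_neg, real_inner_comm]
    have hR2 : d ^ 2 + r ^ 2 + 2 * (1 - ε / 8) * (r * d) ≤ R ^ 2 := by
      rw [hexp, hflip]; nlinarith
    have hkey : ((1 + ε) * r + (1 + ε / 2) * d) ^ 2 ≤ ((1 + ε) * R) ^ 2 := by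
      nlinarith [hR2, mul_nonneg hr hd, mul_nonneg (mul_nonneg hr hd) hε0.le,
        mul_nonneg (mul_nonneg (mul_nonneg hr hd) hε0.le) hε0.le,
        mul_nonneg (mul_nonneg (mul_nonneg hr hd) (mul_nonneg hε0.le hε0.le))
          (by linarith : (0:ℝ) ≤ 1/9 - ε),
        mul_nonneg (sq_nonneg d) hε0.le,
        mul_nonneg (sq_nonneg d) (mul_nonneg hε0.le hε0.le),
        mul_le_mul_of_nonneg_left hR2 (mul_nonneg hε0.le hε0.le),
        mul_le_mul_of_nonneg_left hR2 hε0.le]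
    have hA : (0:ℝ) ≤ (1 + ε) * r + (1 + ε / 2) * d := by positivity
    have hB : (0:ℝ) ≤ (1 + ε) * R := by positivity
    have h2 : (1 + ε) * r + (1 + ε / 2) * d ≤ (1 + ε) * R := by
      have := Real.sqrt_le_sqrt hkey
      rwa [Real.sqrt_sq hA, Real.sqrt_sq hB] at this
    linarith
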